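/- If H(K̃ | Z) ≥ log|G| − ε where K̃ is uniform on the finite abelian group G, K̃ and D̃ are conditionally independent given Z, then H(D̃ | D̃ ⊕ K̃, Z) ≥ H(D̃) − ε, provided D̃ is independent of Z. -/

import Mathlib

open Finset

/-- Probability that the random variable `X` takes value `a`, under pmf `μ`. -/
noncomputable def prb {Ω α : Type*} [Fintype Ω] [DecidableEq α]
    (μ : Ω → ℝ) (X : Ω → α) (a : α) : ℝ :=
  ∑ ω : Ω, if X ω = a then μ ω else 0

/-- Shannon entropy (base 2) of a random variable on a finite space. -/
noncomputable def ent {Ω α : Type*} [Fintype Ω] [Fintype α] [DecidableEq α]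
    (μ : Ω → ℝ) (X : Ω → α) : ℝ :=
  (∑ a : α, Real.negMulLog (prb μ X a)) / Real.log 2

/-- Conditional entropy `H(X|Y) = H(X,Y) - H(Y)`. -/
noncomputable def condEnt {Ω α β : Type*} [Fintype Ω] [Fintype α] [Fintype β]
    [DecidableEq α] [DecidableEq β] (μ : Ω → ℝ) (X : Ω → α) (Y : Ω → β) : ℝ :=
  ent μ (fun ω => (X ω, Y ω)) - ent μ Y

/-- Mutual information `I(X;Y) = H(X) + H(Y) - H(X,Y)`. -/
noncomputable def mutInfo {Ω α β : Type*} [Fintype Ω] [Fintype α] [Fintype β]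
    [DecidableEq α] [DecidableEq β] (μ : Ω → ℝ) (X : Ω → α) (Y : Ω → β) : ℝ :=
  ent μ X + ent μ Y - ent μ (fun ω => (X ω, Y ω))

/-- Conditional mutual information `I(X;Y|Z) = H(X|Z) + H(Y|Z) - H(X,Y|Z)`. -/
noncomputable def condMutInfo {Ω α β γ : Type*} [Fintype Ω] [Fintype α] [Fintype β] [Fintype γ]
    [DecidableEq α] [DecidableEq β] [DecidableEq γ]
    (μ : Ω → ℝ) (X : Ω → α) (Y : Ω → β) (Z : Ω → γ) : ℝ :=
  condEnt μ X Z + condEnt μ Y Z - condEnt μ (fun ω => (X ω, Y ω)) Z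

/-- `μ` is a probability mass function on the finite space `Ω`. -/
def IsPMF {Ω : Type*} [Fintype Ω] (μ : Ω → ℝ) : Prop :=
  (∀ ω, 0 ≤ μ ω) ∧ ∑ ω : Ω, μ ω = 1

/-- `X` and `Y` are independent random variables under `μ`. -/
def IndepRV {Ω α β : Type*} [Fintype Ω] [DecidableEq α] [DecidableEq β]
    (μ : Ω → ℝ) (X : Ω → α) (Y : Ω → β) : Prop :=
  ∀ a b, prb μ (fun ω => (X ω, Y ω)) (a, b) = prb μ X a * prb μ Y b

/-- `X` and `Y` are conditionally independent given `Z` under `μ`. -/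
def CondIndepRV {Ω α β γ : Type*} [Fintype Ω] [DecidableEq α] [DecidableEq β] [DecidableEq γ]
    (μ : Ω → ℝ) (X : Ω → α) (Y : Ω → β) (Z : Ω → γ) : Prop :=
  ∀ a b c, prb μ (fun ω => (X ω, Y ω, Z ω)) (a, b, c) * prb μ Z c
    = prb μ (fun ω => (X ω, Z ω)) (a, c) * prb μ (fun ω => (Y ω, Z ω)) (b, c)

/-- `K` is uniformly distributed on `G`. -/
def IsUniformRV {Ω G : Type*} [Fintype Ω] [Fintype G] [DecidableEq G]
    (μ : Ω → ℝ) (K : Ω → G) : Prop :=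
  ∀ a : G, prb μ K a = 1 / (Fintype.card G : ℝ)

/-! ### Auxiliary lemmas -/

section Aux

variable {Ω α β : Type*} [Fintype Ω] [DecidableEq α] [DecidableEq β]

lemma prb_nonneg (μ : Ω → ℝ) (hμ : ∀ ω, 0 ≤ μ ω) (X : Ω → α) (a : α) :
    0 ≤ prb μ X a := by
  refine Finset.sum_nonneg fun ω _ => ?_
  split_ifs
  · exact hμ ω
  · exact le_rfl

lemma prb_sum [Fintype α] (μ : Ω → ℝ) (X : Ω → α) :
    ∑ a, prb μ X a = ∑ ω, μ ω := by
  unfold prb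
  rw [Finset.sum_comm]
  exact Finset.sum_congr rfl fun ω _ => by simp

lemma prb_sum_one [Fintype α] (μ : Ω → ℝ) (hμ : IsPMF μ) (X : Ω → α) :
    ∑ a, prb μ X a = 1 := by rw [prb_sum]; exact hμ.2

lemma prb_marg_left [Fintype β] (μ : Ω → ℝ) (X : Ω → α) (Y : Ω → β) (a : α) :
    ∑ b, prb μ (fun ω => (X ω, Y ω)) (a, b) = prb μ X a := by
  unfold prb
  rw [Finset.sum_comm]
  refine Finset.sum_congr rfl fun ω _ => ?_
  by_cases h : X ω = a <;> simp [Prod.ext_iff, h]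

lemma prb_marg_right [Fintype α] (μ : Ω → ℝ) (X : Ω → α) (Y : Ω → β) (b : β) :
    ∑ a, prb μ (fun ω => (X ω, Y ω)) (a, b) = prb μ Y b := by
  unfold prb
  rw [Finset.sum_comm]
  refine Finset.sum_congr rfl fun ω _ => ?_
  by_cases h : Y ω = b <;> simp [Prod.ext_iff, h]

lemma prb_pair_snd_le (μ : Ω → ℝ) (hμ : ∀ ω, 0 ≤ μ ω) (X : Ω → α) (Y : Ω → β)
    (a : α) (b : β) :
    prb μ (fun ω => (X ω, Y ω)) (a, b) ≤ prb μ Y b := by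
  refine Finset.sum_le_sum fun ω _ => ?_
  by_cases h : (X ω, Y ω) = (a, b)
  · simp only [h, if_true]
    simp only [Prod.mk.injEq] at h
    rw [if_pos h.2]
  · simp only [h, if_false]
    split_ifs
    · exact hμ ω
    · exact le_rfl

lemma prb_comp_equiv (μ : Ω → ℝ) (e : α ≃ β) (X : Ω → α) (b : β) :
    prb μ (fun ω => e (X ω)) b = prb μ X (e.symm b) := by
  unfold prb
  refine Finset.sum_congr rfl fun ω _ => ?_
  simp [Equiv.apply_eq_iff_eq_symm_apply]

lemma ent_comp_equiv [Fintype α] [Fintype β] (μ : Ω → ℝ) (e : α ≃ β) (X : Ω → α) :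
    ent μ (fun ω => e (X ω)) = ent μ X := by
  unfold ent
  congr 1
  calc ∑ b : β, Real.negMulLog (prb μ (fun ω => e (X ω)) b)
      = ∑ b : β, Real.negMulLog (prb μ X (e.symm b)) :=
        Finset.sum_congr rfl fun b _ => by rw [prb_comp_equiv]
    _ = ∑ a : α, Real.negMulLog (prb μ X a) :=
        Equiv.sum_comp e.symm (fun a => Real.negMulLog (prb μ X a))

lemma sum_comm3 {ι κ l : Type*} [Fintype ι] [Fintype κ] [Fintype l] (f : ι → κ → l → ℝ) :
    ∑ a, ∑ b, ∑ c, f a b c = ∑ c, ∑ a, ∑ b, f a b c := by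
  calc ∑ a, ∑ b, ∑ c, f a b c
      = ∑ a, ∑ c, ∑ b, f a b c :=
        Finset.sum_congr rfl fun a _ => Finset.sum_comm
    _ = ∑ c, ∑ a, ∑ b, f a b c := Finset.sum_comm

lemma entsum_pair_indep [Fintype α] [Fintype β] (μ : Ω → ℝ) (hμ : IsPMF μ)
    (X : Ω → α) (Y : Ω → β) (h : IndepRV μ X Y) :
    ∑ p : α × β, Real.negMulLog (prb μ (fun ω => (X ω, Y ω)) p)
      = ∑ a, Real.negMulLog (prb μ X a) + ∑ b, Real.negMulLog (prb μ Y b) := by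
  have hX : ∑ a, prb μ X a = 1 := prb_sum_one μ hμ X
  have hY : ∑ b, prb μ Y b = 1 := prb_sum_one μ hμ Y
  rw [Fintype.sum_prod_type]
  calc ∑ a, ∑ b, Real.negMulLog (prb μ (fun ω => (X ω, Y ω)) (a, b))
      = ∑ a, ∑ b, (Real.negMulLog (prb μ X a) * prb μ Y b
          + prb μ X a * Real.negMulLog (prb μ Y b)) := by
        refine Finset.sum_congr rfl fun a _ => Finset.sum_congr rfl fun b _ => ?_
        rw [h a b, Real.negMulLog_mul]; ring
    _ = (∑ a, Real.negMulLog (prb μ X a)) * (∑ b, prb μ Y b)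
          + (∑ a, prb μ X a) * (∑ b, Real.negMulLog (prb μ Y b)) := by
        rw [Finset.sum_mul_sum, Finset.sum_mul_sum, ← Finset.sum_add_distrib]
        refine Finset.sum_congr rfl fun a _ => ?_
        rw [← Finset.sum_add_distrib]
    _ = _ := by rw [hX, hY]; ring

lemma ent_pair_indep [Fintype α] [Fintype β] (μ : Ω → ℝ) (hμ : IsPMF μ)
    (X : Ω → α) (Y : Ω → β) (h : IndepRV μ X Y) :
    ent μ (fun ω => (X ω, Y ω)) = ent μ X + ent μ Y := by
  unfold ent
  rw [← add_div, entsum_pair_indep μ hμ X Y h]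

lemma sum_affine3 {κ : Type*} [Fintype κ] (f g h : κ → ℝ) (r s t : ℝ) :
    ∑ b, (f b * r + g b * s + h b * t)
      = (∑ b, f b) * r + (∑ b, g b) * s + (∑ b, h b) * t := by
  rw [Finset.sum_add_distrib, Finset.sum_add_distrib,
    Finset.sum_mul, Finset.sum_mul, Finset.sum_mul]

lemma entsum_condindep {γ' : Type*} [Fintype α] [Fintype β] [Fintype γ'] [DecidableEq γ']
    (μ : Ω → ℝ) (hμ : IsPMF μ)
    (X : Ω → α) (Y : Ω → β) (Z : Ω → γ') (h : CondIndepRV μ X Y Z) :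
    ∑ p : α × β × γ', Real.negMulLog (prb μ (fun ω => (X ω, Y ω, Z ω)) p)
      + ∑ c, Real.negMulLog (prb μ Z c)
      = ∑ p : α × γ', Real.negMulLog (prb μ (fun ω => (X ω, Z ω)) p)
      + ∑ p : β × γ', Real.negMulLog (prb μ (fun ω => (Y ω, Z ω)) p) := by
  have hnn := hμ.1
  have key : ∀ c : γ',
      ∑ a, ∑ b, Real.negMulLog (prb μ (fun ω => (X ω, Y ω, Z ω)) (a, b, c))
        = ∑ a, Real.negMulLog (prb μ (fun ω => (X ω, Z ω)) (a, c))
          + ∑ b, Real.negMulLog (prb μ (fun ω => (Y ω, Z ω)) (b, c))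
          - Real.negMulLog (prb μ Z c) := by
    intro c
    by_cases hc : prb μ Z c = 0
    · have h0X : ∀ a, prb μ (fun ω => (X ω, Z ω)) (a, c) = 0 := fun a =>
        le_antisymm (hc ▸ prb_pair_snd_le μ hnn X Z a c) (prb_nonneg μ hnn _ _)
      have h0Y : ∀ b, prb μ (fun ω => (Y ω, Z ω)) (b, c) = 0 := fun b =>
        le_antisymm (hc ▸ prb_pair_snd_le μ hnn Y Z b c) (prb_nonneg μ hnn _ _)
      have htr : ∀ a b, prb μ (fun ω => (X ω, Y ω, Z ω)) (a, b, c) = 0 := by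
        intro a b
        have h1 : prb μ (fun ω => (X ω, (Y ω, Z ω))) (a, (b, c))
            ≤ prb μ (fun ω => (Y ω, Z ω)) (b, c) :=
          prb_pair_snd_le μ hnn X (fun ω => (Y ω, Z ω)) a (b, c)
        have h2 : 0 ≤ prb μ (fun ω => (X ω, Y ω, Z ω)) (a, b, c) := prb_nonneg μ hnn _ _
        rw [h0Y b] at h1
        exact le_antisymm h1 h2
      simp [htr, h0X, h0Y, hc, Real.negMulLog_zero]
    · set pc := prb μ Z c with hpc
      have hXm : ∑ a, prb μ (fun ω => (X ω, Z ω)) (a, c) = pc :=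
        prb_marg_right μ X Z c
      have hYm : ∑ b, prb μ (fun ω => (Y ω, Z ω)) (b, c) = pc :=
        prb_marg_right μ Y Z c
      have hfac : ∀ a b, prb μ (fun ω => (X ω, Y ω, Z ω)) (a, b, c)
          = prb μ (fun ω => (X ω, Z ω)) (a, c)
            * (prb μ (fun ω => (Y ω, Z ω)) (b, c) * pc⁻¹) := by
        intro a b
        have h' := h a b c
        field_simp
        linarith
      calc ∑ a, ∑ b, Real.negMulLog (prb μ (fun ω => (X ω, Y ω, Z ω)) (a, b, c))
          = ∑ a, ∑ b,
              (prb μ (fun ω => (Y ω, Z ω)) (b, c)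
                  * (pc⁻¹ * Real.negMulLog (prb μ (fun ω => (X ω, Z ω)) (a, c)))
               + Real.negMulLog (prb μ (fun ω => (Y ω, Z ω)) (b, c))
                  * (pc⁻¹ * prb μ (fun ω => (X ω, Z ω)) (a, c))
               + prb μ (fun ω => (Y ω, Z ω)) (b, c)
                  * (Real.negMulLog pc⁻¹ * prb μ (fun ω => (X ω, Z ω)) (a, c))) := by
            refine Finset.sum_congr rfl fun a _ => Finset.sum_congr rfl fun b _ => ?_
            rw [hfac a b, Real.negMulLog_mul, Real.negMulLog_mul]
            ring
        _ = ∑ a,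
              (Real.negMulLog (prb μ (fun ω => (X ω, Z ω)) (a, c)) * (pc * pc⁻¹)
               + prb μ (fun ω => (X ω, Z ω)) (a, c)
                  * ((∑ b, Real.negMulLog (prb μ (fun ω => (Y ω, Z ω)) (b, c))) * pc⁻¹)
               + prb μ (fun ω => (X ω, Z ω)) (a, c) * (pc * Real.negMulLog pc⁻¹)) := by
            refine Finset.sum_congr rfl fun a _ => ?_
            rw [sum_affine3, hYm]
            ring
        _ = (∑ a, Real.negMulLog (prb μ (fun ω => (X ω, Z ω)) (a, c))) * (pc * pc⁻¹)
            + pc * ((∑ b, Real.negMulLog (prb μ (fun ω => (Y ω, Z ω)) (b, c))) * pc⁻¹)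
            + pc * (pc * Real.negMulLog pc⁻¹) := by
            rw [sum_affine3, hXm]
        _ = _ := by
            have hinv : Real.negMulLog pc⁻¹ = pc⁻¹ * Real.log pc := by
              rw [Real.negMulLog, Real.log_inv]; ring
            rw [hinv, Real.negMulLog]
            field_simp
            ring
  have reshape : ∑ p : α × β × γ', Real.negMulLog (prb μ (fun ω => (X ω, Y ω, Z ω)) p)
      = ∑ a, ∑ b, ∑ c, Real.negMulLog (prb μ (fun ω => (X ω, Y ω, Z ω)) (a, b, c)) := by
    rw [Fintype.sum_prod_type]
    exact Finset.sum_congr rfl fun a _ => by rw [Fintype.sum_prod_type]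
  rw [reshape, sum_comm3]
  have lhs_eq : ∑ c, ∑ a, ∑ b, Real.negMulLog (prb μ (fun ω => (X ω, Y ω, Z ω)) (a, b, c))
      = ∑ c, (∑ a, Real.negMulLog (prb μ (fun ω => (X ω, Z ω)) (a, c))
          + ∑ b, Real.negMulLog (prb μ (fun ω => (Y ω, Z ω)) (b, c))
          - Real.negMulLog (prb μ Z c)) :=
    Finset.sum_congr rfl fun c _ => key c
  rw [lhs_eq]
  have eX : ∑ p : α × γ', Real.negMulLog (prb μ (fun ω => (X ω, Z ω)) p)
      = ∑ c, ∑ a, Real.negMulLog (prb μ (fun ω => (X ω, Z ω)) (a, c)) := by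
    rw [Fintype.sum_prod_type]; exact Finset.sum_comm
  have eY : ∑ p : β × γ', Real.negMulLog (prb μ (fun ω => (Y ω, Z ω)) p)
      = ∑ c, ∑ b, Real.negMulLog (prb μ (fun ω => (Y ω, Z ω)) (b, c)) := by
    rw [Fintype.sum_prod_type]; exact Finset.sum_comm
  rw [eX, eY, Finset.sum_sub_distrib, Finset.sum_add_distrib]
  ring

lemma entsum_pair_le [Fintype α] [Fintype β] [Nonempty α] (μ : Ω → ℝ) (hμ : IsPMF μ)
    (X : Ω → α) (Y : Ω → β) :
    ∑ p : α × β, Real.negMulLog (prb μ (fun ω => (X ω, Y ω)) p)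
      ≤ Real.log (Fintype.card α) + ∑ b, Real.negMulLog (prb μ Y b) := by
  have hnn := hμ.1
  set n : ℕ := Fintype.card α with hn
  have hnpos : (0 : ℝ) < n := by
    have := Fintype.card_pos (α := α)
    exact_mod_cast this
  have key : ∀ b : β,
      ∑ a, Real.negMulLog (prb μ (fun ω => (X ω, Y ω)) (a, b))
        ≤ prb μ Y b * Real.log n + Real.negMulLog (prb μ Y b) := by
    intro b
    set s := prb μ Y b with hs
    have hmarg : ∑ a, prb μ (fun ω => (X ω, Y ω)) (a, b) = s := prb_marg_right μ X Y b
    have jensen :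
        ∑ a : α, ((n : ℝ)⁻¹) • Real.negMulLog (prb μ (fun ω => (X ω, Y ω)) (a, b))
          ≤ Real.negMulLog (∑ a : α, ((n : ℝ)⁻¹) • prb μ (fun ω => (X ω, Y ω)) (a, b)) := by
      refine Real.concaveOn_negMulLog.le_map_sum (fun a _ => by positivity) ?_
        (fun a _ => prb_nonneg μ hnn _ _)
      rw [Finset.sum_const, Finset.card_univ]
      simp only [nsmul_eq_mul]
      rw [mul_inv_cancel₀ (ne_of_gt hnpos)]
    have hsum : ∑ a : α, ((n : ℝ)⁻¹) • prb μ (fun ω => (X ω, Y ω)) (a, b)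
        = (n : ℝ)⁻¹ * s := by
      simp only [smul_eq_mul, ← Finset.mul_sum, hmarg]
    rw [hsum] at jensen
    have jensen' : ∑ a, Real.negMulLog (prb μ (fun ω => (X ω, Y ω)) (a, b))
        ≤ (n : ℝ) * Real.negMulLog ((n : ℝ)⁻¹ * s) := by
      have h' := mul_le_mul_of_nonneg_left jensen (le_of_lt hnpos)
      calc ∑ a, Real.negMulLog (prb μ (fun ω => (X ω, Y ω)) (a, b))
          = (n : ℝ) * ∑ a : α, ((n : ℝ)⁻¹)
              • Real.negMulLog (prb μ (fun ω => (X ω, Y ω)) (a, b)) := by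
            simp only [smul_eq_mul, ← Finset.mul_sum, ← mul_assoc,
              mul_inv_cancel₀ (ne_of_gt hnpos), one_mul]
        _ ≤ (n : ℝ) * Real.negMulLog ((n : ℝ)⁻¹ * s) := h'
    refine jensen'.trans (le_of_eq ?_)
    by_cases hs0 : s = 0
    · simp [hs0, Real.negMulLog_zero]
    · rw [Real.negMulLog, Real.negMulLog, Real.log_mul (by positivity) hs0, Real.log_inv]
      field_simp
      ring
  calc ∑ p : α × β, Real.negMulLog (prb μ (fun ω => (X ω, Y ω)) p)
      = ∑ b, ∑ a, Real.negMulLog (prb μ (fun ω => (X ω, Y ω)) (a, b)) := by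
        rw [Fintype.sum_prod_type]; exact Finset.sum_comm
    _ ≤ ∑ b, (prb μ Y b * Real.log n + Real.negMulLog (prb μ Y b)) :=
        Finset.sum_le_sum fun b _ => key b
    _ = (∑ b, prb μ Y b) * Real.log n + ∑ b, Real.negMulLog (prb μ Y b) := by
        rw [Finset.sum_add_distrib, Finset.sum_mul]
    _ = _ := by rw [prb_sum_one μ hμ Y, one_mul]

/-- The one-time-pad relabeling bijection. -/
def otpEquiv (G γ : Type*) [AddCommGroup G] : G × G × γ ≃ G × G × γ where
  toFun p := (p.2.1, (p.2.1 + p.1, p.2.2))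
  invFun p := (p.2.1 - p.1, (p.1, p.2.2))
  left_inv p := by simp
  right_inv p := by simp

end Aux
/-- Almost-secret key yields almost-perfect one-time-pad secrecy:
if `H(K̃|Z) ≥ log|G| - ε`, `K̃` uniform on `G`, `K̃ ⫫ D̃ | Z`, and `D̃ ⫫ Z`, then
`H(D̃ | D̃ ⊕ K̃, Z) ≥ H(D̃) - ε`. -/
theorem otp_almost_secret_key
    {Ω G γ : Type*} [Fintype Ω] [Fintype G] [DecidableEq G] [AddCommGroup G]
    [Fintype γ] [DecidableEq γ]
    (μ : Ω → ℝ) (D K : Ω → G) (Z : Ω → γ) (ε : ℝ)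
    (hμ : IsPMF μ) (hε : 0 ≤ ε) (hKunif : IsUniformRV μ K)
    (hci : CondIndepRV μ K D Z) (hDZ : IndepRV μ D Z)
    (hkey : condEnt μ K Z ≥ Real.logb 2 (Fintype.card G) - ε) :
    condEnt μ D (fun ω => (D ω + K ω, Z ω)) ≥ ent μ D - ε := by
  have hnn := hμ.1
  have hlog2 : (0:ℝ) < Real.log 2 := Real.log_pos one_lt_two
  haveI hNe : Nonempty G := ⟨0⟩
  have h1 : ent μ (fun ω => (D ω, (D ω + K ω, Z ω)))
      = ent μ (fun ω => (K ω, (D ω, Z ω))) :=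
    ent_comp_equiv μ (otpEquiv G γ) (fun ω => (K ω, (D ω, Z ω)))
  have h2 : ent μ (fun ω => (K ω, (D ω, Z ω))) + ent μ Z
      = ent μ (fun ω => (K ω, Z ω)) + ent μ (fun ω => (D ω, Z ω)) := by
    unfold ent
    rw [← add_div, ← add_div, entsum_condindep μ hμ K D Z hci]
  have h3 : ent μ (fun ω => (D ω, Z ω)) = ent μ D + ent μ Z :=
    ent_pair_indep μ hμ D Z hDZ
  have h4 : ent μ (fun ω => (D ω + K ω, Z ω)) ≤ Real.logb 2 (Fintype.card G) + ent μ Z := by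
    unfold ent
    rw [← Real.log_div_log, ← add_div]
    gcongr
    exact entsum_pair_le μ hμ (fun ω => D ω + K ω) Z
  unfold condEnt at hkey ⊢
  linarith [h1, h2, h3, h4, hkey]
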